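/- The characteristic function d(ν) = −4mν − 6m + 2m(e^ν + e^{−ν}) − 2m(e^{2ν} + e^{−2ν}) + 4m e^ν has no purely imaginary zeros other than ν = 0: for ℓ ∈ ℝ, ℓ ≠ 0, d(iℓ) ≠ 0. -/
import Mathlib


/-- The characteristic function
`d(ν) = −4mν − 6m + 2m(e^ν + e^{−ν}) − 2m(e^{2ν} + e^{−2ν}) + 4m e^ν`,
with `m > 0`, has no purely imaginary zeros other than `ν = 0`. -/
theorem characteristic_no_imaginary_zeros (m : ℝ) (hm : 0 < m) :
    ∀ ℓ : ℝ, ℓ ≠ 0 →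
      (-4 * (m : ℂ) * (Complex.I * ℓ) - 6 * m
        + 2 * m * (Complex.exp (Complex.I * ℓ) + Complex.exp (-(Complex.I * ℓ)))
        - 2 * m * (Complex.exp (2 * (Complex.I * ℓ)) + Complex.exp (-(2 * (Complex.I * ℓ))))
        + 4 * m * Complex.exp (Complex.I * ℓ)) ≠ 0 := by
  intro ℓ hℓ h
  have hsin : Real.sin ℓ ≠ ℓ := by
    rcases lt_trichotomy ℓ 0 with h1|h1|h1
    · have := Real.sin_lt (show (0:ℝ) < -ℓ by linarith)
      rw [Real.sin_neg] at this; intro he; linarith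
    · exact absurd h1 hℓ
    · have := Real.sin_lt h1; intro he; linarith
  have him := congrArg Complex.im h
  simp [Complex.ext_iff, Complex.exp_re, Complex.exp_im, Complex.add_im,
    Complex.mul_im, Complex.mul_re] at him
  have hz : m * (Real.sin ℓ - ℓ) = 0 := by linarith
  rcases mul_eq_zero.mp hz with h2 | h2
  · linarith
  · exact hsin (by linarith)
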